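/- Let p be a prime, n ≥ 1, q = p^n, and let R = W(F_q) be the ring of p-typical Witt vectors of the field F_q with q elements (the ring of integers of the unramified extension of Q_p of degree n), with Frobenius automorphism φ : R → R (the unique ring automorphism inducing x ↦ x^p on F_q; φ^n = id). Let x ∈ R be such that (x, φ(x), …, φ^{n−1}(x)) is a Z_p-basis of R as a Z_p-module, and let u ∈ GL_r(Z_p) satisfy u^n ≡ 1 (mod p·M_r(Z_p)). Then the matrix E := Σ_{i=0}^{n−1} φ^i(x)·u^{−i} ∈ M_r(R) is invertible, i.e. E ∈ GL_r(R). -/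
import Mathlib

private lemma auxSFU_pow_ne (p : ℕ) [Fact p.Prime] {k : Type*} [Field k] [Finite k] {n m : ℕ}
    (hcard : Nat.card k = p ^ n) (hm0 : 0 < m) (hmn : m < n)
    (hall : ∀ z : k, z ^ p ^ m = z) : False := by
  have hp1 : 1 < p := (Fact.out : p.Prime).one_lt
  haveI : Fintype k := Fintype.ofFinite k
  haveI : DecidableEq k := Classical.decEq k
  haveI : Fintype kˣ := Fintype.ofFinite _
  have hcard' : Fintype.card k = p ^ n := by
    rw [← Nat.card_eq_fintype_card]; exact hcard
  obtain ⟨z0, hz0⟩ := IsCyclic.exists_generator (α := kˣ)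
  have hord : orderOf z0 = p ^ n - 1 := by
    rw [orderOf_eq_card_of_forall_mem_zpowers hz0, Nat.card_units, hcard]
  have hzpow : z0 ^ p ^ m = z0 := by
    ext
    push_cast
    exact hall _
  have h1 : z0 ^ (p ^ m - 1) = 1 := by
    have h2 : z0 ^ (p ^ m - 1) * z0 = z0 := by
      rw [← pow_succ]
      have : p ^ m - 1 + 1 = p ^ m := by
        have : 0 < p ^ m := pow_pos (by omega) m
        omega
      rw [this, hzpow]
    calc z0 ^ (p ^ m - 1) = z0 ^ (p ^ m - 1) * z0 * z0⁻¹ := by group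
    _ = 1 := by rw [h2]; group
  have hdvd : orderOf z0 ∣ p ^ m - 1 := orderOf_dvd_of_pow_eq_one h1
  rw [hord] at hdvd
  have hlt : p ^ m < p ^ n := Nat.pow_lt_pow_right hp1 hmn
  have hpm : 1 < p ^ m := by
    calc 1 < p := hp1
    _ ≤ p ^ m := Nat.le_self_pow (by omega) p
  have := Nat.le_of_dvd (by omega) hdvd
  omega

private lemma auxSFU_Xdet {p n : ℕ} [Fact p.Prime] {k : Type*} [Field k] [CharP k p] [Finite k]
    (hcard : Nat.card k = p ^ n) (g : ZMod p →+* k) (x0 : k)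
    (hspan : ∀ z : k, ∃ d : Fin n → ZMod p,
      z = ∑ i : Fin n, g (d i) * x0 ^ p ^ (i : ℕ)) :
    (Matrix.of fun i j : Fin n => x0 ^ p ^ ((i : ℕ) + (j : ℕ))).det ≠ 0 := by
  have hp0 : 0 < p := (Fact.out : p.Prime).pos
  intro hdet
  obtain ⟨a, ha0, haX⟩ := Matrix.exists_mulVec_eq_zero_iff.mpr hdet
  -- rows: for all i, ∑ j, x0 ^ p ^ (i + j) * a j = 0
  have hrow : ∀ i : Fin n, ∑ j : Fin n, x0 ^ p ^ ((i : ℕ) + (j : ℕ)) * a j = 0 := by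
    intro i
    have := congrFun haX i
    simpa [Matrix.mulVec, dotProduct] using this
  -- hence ∑ j, a j * z ^ p ^ j = 0 for every z
  have hzero : ∀ z : k, ∑ j : Fin n, a j * z ^ p ^ (j : ℕ) = 0 := by
    intro z
    obtain ⟨d, hd⟩ := hspan z
    have hzj : ∀ j : Fin n, z ^ p ^ (j : ℕ)
        = ∑ i : Fin n, g (d i) * x0 ^ p ^ ((i : ℕ) + (j : ℕ)) := by
      intro j
      rw [hd]
      rw [sum_pow_char_pow]
      refine Finset.sum_congr rfl fun i _ => ?_
      rw [mul_pow, ← map_pow, ZMod.pow_card_pow, ← pow_mul, ← pow_add]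
    calc ∑ j : Fin n, a j * z ^ p ^ (j : ℕ)
        = ∑ j : Fin n, ∑ i : Fin n, g (d i) * (x0 ^ p ^ ((i : ℕ) + (j : ℕ)) * a j) := by
          refine Finset.sum_congr rfl fun j _ => ?_
          rw [hzj j, Finset.mul_sum]
          refine Finset.sum_congr rfl fun i _ => ?_
          ring
      _ = ∑ i : Fin n, g (d i) * ∑ j : Fin n, x0 ^ p ^ ((i : ℕ) + (j : ℕ)) * a j := by
          rw [Finset.sum_comm]
          simp [Finset.mul_sum]
      _ = 0 := by simp [hrow]
  -- Dedekind independence of the monoid homs z ↦ z ^ p ^ j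
  have hinj' : ∀ b c : Fin n, (b : ℕ) < (c : ℕ) →
      (powMonoidHom (p ^ (b : ℕ)) : k →* k) = powMonoidHom (p ^ (c : ℕ)) → False := by
    intro b c hbc heq
    have hall : ∀ z : k, z ^ p ^ ((c : ℕ) - (b : ℕ)) = z := by
      intro z
      have h1 : z ^ p ^ (b : ℕ) = z ^ p ^ (c : ℕ) := by
        have := congrArg (fun f : k →* k => f z) heq
        simpa [powMonoidHom] using this
      have h2 : (z ^ p ^ ((c : ℕ) - (b : ℕ))) ^ p ^ (b : ℕ) = z ^ p ^ (b : ℕ) := by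
        rw [← pow_mul, ← pow_add]
        rw [Nat.sub_add_cancel (le_of_lt hbc)] at *
        rw [h1]
      have h3 : (z ^ p ^ ((c : ℕ) - (b : ℕ))) - z = 0 := by
        have h4 : ((z ^ p ^ ((c : ℕ) - (b : ℕ))) - z) ^ p ^ (b : ℕ) = 0 := by
          rw [sub_pow_char_pow, h2, sub_self]
        exact pow_eq_zero_iff (by positivity) |>.mp h4
      exact sub_eq_zero.mp h3
    exact auxSFU_pow_ne p hcard (by omega) (by omega) hall
  have hinj : Function.Injective
      (fun j : Fin n => (powMonoidHom (p ^ (j : ℕ)) : k →* k)) := by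
    intro b c h
    rcases lt_trichotomy (b : ℕ) (c : ℕ) with h' | h' | h'
    · exact absurd h (fun hh => hinj' b c h' hh)
    · exact Fin.ext h'
    · exact absurd h.symm (fun hh => hinj' c b h' hh)
  have li := (linearIndependent_monoidHom k k).comp _ hinj
  rw [Fintype.linearIndependent_iff] at li
  refine ha0 (funext fun j => li a ?_ j)
  funext z
  simpa [powMonoidHom, Finset.sum_apply, smul_eq_mul] using hzero z

private lemma auxSFU_field {p r n' : ℕ} [Fact p.Prime] {k : Type*} [Field k] [CharP k p]
    [Finite k] (hcard : Nat.card k = p ^ (n' + 1)) (g : ZMod p →+* k) (x0 : k)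
    (hspan : ∀ z : k, ∃ d : Fin (n' + 1) → ZMod p,
      z = ∑ i : Fin (n' + 1), g (d i) * x0 ^ p ^ (i : ℕ))
    (A B : Matrix (Fin r) (Fin r) (ZMod p)) (hAB : A * B = 1) (hBn : B ^ (n' + 1) = 1) :
    IsUnit (∑ i ∈ Finset.range (n' + 1), (x0 ^ p ^ i) • (A ^ i).map g) := by
  set N := n' + 1 with hN
  haveI : Fintype k := Fintype.ofFinite k
  have hc : Fintype.card k = p ^ N := by rw [← Nat.card_eq_fintype_card, hcard]
  have hper : ∀ a : k, a ^ p ^ N = a := by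
    intro a; rw [← hc]; exact FiniteField.pow_card a
  set e : ℕ → k := fun m => x0 ^ p ^ m with he_def
  have he_add : ∀ t, e (t + N) = e t := by
    intro t
    show x0 ^ p ^ (t + N) = x0 ^ p ^ t
    rw [pow_add, pow_mul]
    exact hper _
  have he_mod : ∀ m, e m = e (m % N) := by
    intro m
    conv_lhs => rw [← Nat.mod_add_div m N]
    generalize m / N = q
    induction q with
    | zero => simp
    | succ q ih => rw [Nat.mul_succ, ← Nat.add_assoc, he_add, ih]
  have he_congr : ∀ {m1 m2 : ℕ}, m1 % N = m2 % N → e m1 = e m2 := by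
    intro m1 m2 h
    rw [he_mod m1, h, ← he_mod m2]
  have hA : A = B ^ n' := by
    calc A = A * B ^ N := by rw [hBn, mul_one]
    _ = (A * B) * B ^ n' := by rw [hN, pow_succ', ← mul_assoc]
    _ = B ^ n' := by rw [hAB, one_mul]
  have hBmod : ∀ m, B ^ m = B ^ (m % N) := by
    intro m
    conv_lhs => rw [← Nat.mod_add_div m N]
    rw [pow_add, pow_mul, hBn, one_pow, mul_one]
  set X : Matrix (Fin N) (Fin N) k := Matrix.of fun i j : Fin N => e ((i : ℕ) + (j : ℕ))
    with hXdef
  have hX : X.det ≠ 0 := auxSFU_Xdet hcard g x0 hspan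
  set y : Fin N → k := X⁻¹.mulVec (Pi.single (0 : Fin N) 1) with hy
  have hXy : X.mulVec y = Pi.single 0 1 := by
    rw [hy, Matrix.mulVec_mulVec, Matrix.mul_nonsing_inv _ (isUnit_iff_ne_zero.mpr hX),
      Matrix.one_mulVec]
  have hkey : ∀ j' : Fin N, ∑ i : Fin N, e i * y (i + j') = if j' = 0 then 1 else 0 := by
    intro j'
    have h1 : (X.mulVec y) (-j') = ∑ m : Fin N, e (((-j' : Fin N) : ℕ) + (m : ℕ)) * y m := by
      simp [Matrix.mulVec, dotProduct, hXdef]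
    have h2 : ∑ i : Fin N, e i * y (i + j')
        = ∑ m : Fin N, e (((-j' : Fin N) : ℕ) + (m : ℕ)) * y m := by
      refine Fintype.sum_bijective (fun i : Fin N => i + j') (Equiv.addRight j').bijective
        _ _ fun i => ?_
      have hv : (-j') + (i + j') = i := by rw [add_comm i j', neg_add_cancel_left]
      have hmod : (((-j' : Fin N) : ℕ) + ((i + j' : Fin N) : ℕ)) % N = (i : ℕ) % N := by
        rw [← Fin.val_add, hv, Nat.mod_eq_of_lt i.isLt]
      rw [he_congr hmod]
    rw [h2, ← h1, hXy, Pi.single_apply]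
    simp [neg_eq_zero]
  set G : Matrix (Fin r) (Fin r) k := ∑ j : Fin N, y j • (B ^ (j : ℕ)).map g with hG
  set S : Matrix (Fin r) (Fin r) k := ∑ i ∈ Finset.range N, (x0 ^ p ^ i) • (A ^ i).map g
    with hS
  have hSG : S * G = 1 := by
    have hS' : S = ∑ i : Fin N, e i • (A ^ (i : ℕ)).map g := by
      rw [hS, ← Fin.sum_univ_eq_sum_range]
    rw [hS', hG, Finset.sum_mul_sum]
    have hterm : ∀ i j : Fin N, (e i • (A ^ (i : ℕ)).map g) * (y j • (B ^ (j : ℕ)).map g)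
        = (e i * y j) • (B ^ ((n' * (i : ℕ) + (j : ℕ)) % N)).map g := by
      intro i j
      rw [smul_mul_assoc, mul_smul_comm, smul_smul, ← Matrix.map_mul, hA, ← pow_mul,
        ← pow_add, ← hBmod]
    calc ∑ i : Fin N, ∑ j : Fin N,
          (e i • (A ^ (i : ℕ)).map g) * (y j • (B ^ (j : ℕ)).map g)
        = ∑ i : Fin N, ∑ j'' : Fin N,
            (e i * y (i + j'')) • (B ^ (j'' : ℕ)).map g := by
          refine Finset.sum_congr rfl fun i _ => ?_
          refine (Fintype.sum_bijective (fun j'' : Fin N => i + j'')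
            (Equiv.addLeft i).bijective _ _ fun j'' => ?_).symm
          rw [hterm]
          congr 2
          rw [Fin.val_add]
          have h1 : (n' * (i : ℕ) + ((i : ℕ) + (j'' : ℕ)) % N) % N
              = (n' * (i : ℕ) + ((i : ℕ) + (j'' : ℕ))) % N :=
            ((Nat.mod_modEq ((i : ℕ) + (j'' : ℕ)) N).add_left (n' * (i : ℕ)))
          have h2 : n' * (i : ℕ) + ((i : ℕ) + (j'' : ℕ)) = (j'' : ℕ) + (i : ℕ) * N := by
            show n' * (i : ℕ) + ((i : ℕ) + (j'' : ℕ)) = (j'' : ℕ) + (i : ℕ) * (n' + 1)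
            ring
          rw [h1, h2, Nat.add_mul_mod_self_right, Nat.mod_eq_of_lt j''.isLt]
      _ = ∑ j'' : Fin N, ∑ i : Fin N,
            (e i * y (i + j'')) • (B ^ (j'' : ℕ)).map g := Finset.sum_comm
      _ = ∑ j'' : Fin N, (if j'' = 0 then (1 : k) else 0) • (B ^ (j'' : ℕ)).map g := by
          refine Finset.sum_congr rfl fun j'' _ => ?_
          rw [← Finset.sum_smul, hkey]
      _ = 1 := by
          simp only [ite_smul, one_smul, zero_smul]
          rw [Finset.sum_ite_eq' Finset.univ (0 : Fin N)]
          simp [Matrix.map_one g (map_zero g) (map_one g)]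
  have hGS : G * S = 1 := mul_eq_one_comm.mp hSG
  exact ⟨⟨S, G, hSG, hGS⟩, rfl⟩



/-- Let `R = W(F_q)`, `q = pⁿ`, with Frobenius `φ`. If
`(x, φx, …, φ^{n−1}x)` is a `ℤ_p`-basis of `R` (every element is uniquely a
`ℤ_p = W(F_p)`-linear combination of the `φⁱx`) and `u ∈ GL_r(ℤ_p)` satisfies
`uⁿ ≡ 1 (mod p)`, then `E = ∑_{i=0}^{n−1} φⁱ(x)·u^{−i} ∈ M_r(R)` is invertible. -/
theorem sum_frobenius_smul_uInvPow_isUnit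
    {p n r : ℕ} [Fact p.Prime] (hn : 1 ≤ n) (hr : 1 ≤ r)
    (x : WittVector p (GaloisField p n))
    (hbasis : ∀ y : WittVector p (GaloisField p n),
      ∃! c : Fin n → WittVector p (ZMod p),
        y = ∑ i : Fin n,
          WittVector.map (algebraMap (ZMod p) (GaloisField p n)) (c i)
            * (⇑(WittVector.frobenius))^[(i : ℕ)] x)
    (u : Matrix.GeneralLinearGroup (Fin r) (WittVector p (ZMod p)))
    (hu : ∀ i j, ∃ c : WittVector p (ZMod p),
      ((u ^ n : Matrix.GeneralLinearGroup (Fin r) (WittVector p (ZMod p)))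
          : Matrix (Fin r) (Fin r) (WittVector p (ZMod p))) i j
        - (1 : Matrix (Fin r) (Fin r) (WittVector p (ZMod p))) i j = p * c)
    (E : Matrix (Fin r) (Fin r) (WittVector p (GaloisField p n)))
    (hE : E = ∑ i ∈ Finset.range n,
      ((⇑(WittVector.frobenius))^[i] x) •
        (((u⁻¹ ^ i : Matrix.GeneralLinearGroup (Fin r) (WittVector p (ZMod p)))
            : Matrix (Fin r) (Fin r) (WittVector p (ZMod p)))).map
          ⇑(WittVector.map (algebraMap (ZMod p) (GaloisField p n)))) :
    IsUnit E := by
  obtain ⟨n', rfl⟩ : ∃ n', n = n' + 1 := ⟨n - 1, by omega⟩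
  set g : ZMod p →+* GaloisField p (n' + 1) := algebraMap (ZMod p) (GaloisField p (n' + 1))
    with hg
  set ρ : WittVector p (GaloisField p (n' + 1)) →+* GaloisField p (n' + 1) := WittVector.ghostComponent 0 with hρdef
  set ρ' : WittVector p (ZMod p) →+* ZMod p := WittVector.ghostComponent 0 with hρ'def
  have hρ : ∀ a : WittVector p (GaloisField p (n' + 1)), ρ a = a.coeff 0 := by
    intro a
    rw [hρdef, WittVector.ghostComponent_apply, wittPolynomial_zero, MvPolynomial.aeval_X]
  have hρ' : ∀ a : WittVector p (ZMod p), ρ' a = a.coeff 0 := by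
    intro a
    rw [hρ'def, WittVector.ghostComponent_apply, wittPolynomial_zero, MvPolynomial.aeval_X]
  set x0 : GaloisField p (n' + 1) := x.coeff 0 with hx0
  have hfrob : ∀ i : ℕ, ρ ((⇑(WittVector.frobenius))^[i] x) = x0 ^ p ^ i := by
    intro i
    induction i with
    | zero => simp [hρ, hx0]
    | succ i ih =>
      rw [Function.iterate_succ_apply', hρ, WittVector.coeff_frobenius_charP, ← hρ, ih,
        ← pow_mul, ← pow_succ]
  have hcard : Nat.card (GaloisField p (n' + 1)) = p ^ (n' + 1) := GaloisField.card p (n' + 1) (by omega)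
  have hspan : ∀ z : GaloisField p (n' + 1), ∃ d : Fin (n' + 1) → ZMod p,
      z = ∑ i : Fin (n' + 1), g (d i) * x0 ^ p ^ (i : ℕ) := by
    intro z
    obtain ⟨c, hc, -⟩ := hbasis (WittVector.mk p (fun j => if j = 0 then z else 0))
    refine ⟨fun i => (c i).coeff 0, ?_⟩
    have h0 := congrArg ρ hc
    rw [map_sum] at h0
    have hz : ρ (WittVector.mk p (fun j => if j = 0 then z else 0)) = z := by
      rw [hρ, WittVector.coeff_mk]
      simp
    rw [hz] at h0
    rw [h0]
    refine Finset.sum_congr rfl fun i _ => ?_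
    rw [map_mul, hfrob, hρ, WittVector.map_coeff]
  set Φ : Matrix (Fin r) (Fin r) (WittVector p (ZMod p)) →+* Matrix (Fin r) (Fin r) (ZMod p) :=
    ρ'.mapMatrix with hΦ
  set A : Matrix (Fin r) (Fin r) (ZMod p) :=
    Φ ((u⁻¹ : Matrix.GeneralLinearGroup (Fin r) (WittVector p (ZMod p))) :
      Matrix (Fin r) (Fin r) (WittVector p (ZMod p))) with hA
  set B : Matrix (Fin r) (Fin r) (ZMod p) :=
    Φ ((u : Matrix.GeneralLinearGroup (Fin r) (WittVector p (ZMod p))) :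
      Matrix (Fin r) (Fin r) (WittVector p (ZMod p))) with hB
  have hAB : A * B = 1 := by
    rw [hA, hB, ← map_mul, Units.inv_mul, map_one]
  have hBn : B ^ (n' + 1) = 1 := by
    rw [hB, ← map_pow, ← Units.val_pow_eq_pow_val]
    ext i j
    obtain ⟨c, hc⟩ := hu i j
    have hentry : ((u ^ (n' + 1) : Matrix.GeneralLinearGroup (Fin r) (WittVector p (ZMod p))) :
        Matrix (Fin r) (Fin r) (WittVector p (ZMod p))) i j
        = (1 : Matrix (Fin r) (Fin r) (WittVector p (ZMod p))) i j + p * c := by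
      rw [← hc]; ring
    rw [RingHom.mapMatrix_apply, Matrix.map_apply, hentry, map_add, map_mul, map_natCast,
      ZMod.natCast_self, zero_mul, add_zero]
    simp [Matrix.one_apply, apply_ite ρ']
  have hAi : ∀ i : ℕ, A ^ i
      = Φ ((u⁻¹ ^ i : Matrix.GeneralLinearGroup (Fin r) (WittVector p (ZMod p))) :
        Matrix (Fin r) (Fin r) (WittVector p (ZMod p))) := by
    intro i
    rw [hA, ← map_pow, ← Units.val_pow_eq_pow_val]
  have hmap : E.map ρ = ∑ i ∈ Finset.range (n' + 1), (x0 ^ p ^ i) • (A ^ i).map g := by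
    rw [hE]
    ext s t
    simp only [Matrix.map_apply, Matrix.sum_apply, Matrix.smul_apply, smul_eq_mul, map_sum,
      map_mul]
    refine Finset.sum_congr rfl fun i _ => ?_
    congr 1
    · exact hfrob i
    · rw [hρ, WittVector.map_coeff, hAi i, hΦ, RingHom.mapMatrix_apply, Matrix.map_apply, hρ']
  have hunit : IsUnit (E.map ρ) := by
    rw [hmap]
    exact auxSFU_field hcard g x0 hspan A B hAB hBn
  have hdet : IsUnit ((E.map ρ).det) := (Matrix.isUnit_iff_isUnit_det _).mp hunit
  rw [← RingHom.mapMatrix_apply, ← RingHom.map_det] at hdet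
  have hne : E.det.coeff 0 ≠ 0 := by
    rw [← hρ]
    exact hdet.ne_zero
  exact (Matrix.isUnit_iff_isUnit_det E).mpr (WittVector.isUnit_of_coeff_zero_ne_zero _ hne)
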